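/- Let R be a (not necessarily unital) ring which is the union R = A ∪ B ∪ C of three proper, pairwise distinct subrings A, B, C, and let K = A ∩ B ∩ C. Then each pairwise intersection equals the triple intersection, i.e., A ∩ B = A ∩ C = B ∩ C = K, and K has additive index 4 in R, i.e., |R : K| = 4. -/

import Mathlib

section Aux

variable {R : Type*} [NonUnitalRing R]

/-- Auxiliary: an abelian-group-style lemma extracted for the main theorem. -/
lemma aux_inf_le_third (A B C : NonUnitalSubring R)
    (hcov : ∀ x : R, x ∈ A ∨ x ∈ B ∨ x ∈ C)
    (c : R) (hcC : c ∈ C) (hcA : c ∉ A) (hcB : c ∉ B) :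
    A ⊓ B ≤ C := by
  intro x hx
  obtain ⟨hxA, hxB⟩ := hx
  rcases hcov (x + c) with h | h | h
  · exact absurd (by simpa using A.sub_mem h hxA) hcA
  · exact absurd (by simpa using B.sub_mem h hxB) hcB
  · simpa using C.sub_mem h hcC

/-- Auxiliary: under the cover hypotheses, `A` has additive index `2`. -/
lemma aux_index_two (A B C : NonUnitalSubring R)
    (hcov : ∀ x : R, x ∈ A ∨ x ∈ B ∨ x ∈ C)
    (hBCA : B ⊓ C ≤ A)
    (b : R) (hbB : b ∈ B) (hbA : b ∉ A)
    (c : R) (hcC : c ∈ C) (hcA : c ∉ A) :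
    A.toAddSubgroup.index = 2 := by
  have sumBC : ∀ u v : R, u ∈ B → u ∉ A → v ∈ C → v ∉ A → u + v ∈ A := by
    intro u v huB huA hvC hvA
    rcases hcov (u + v) with h | h | h
    · exact h
    · have : v ∈ B := by simpa using B.sub_mem h huB
      exact absurd (hBCA ⟨this, hvC⟩) hvA
    · have : u ∈ C := by simpa using C.sub_mem h hvC
      exact absurd (hBCA ⟨huB, this⟩) huA
  have hsub : ∀ x y : R, x ∉ A → y ∉ A → x - y ∈ A := by
    intro x y hx hy
    have hx' := (hcov x).resolve_left hx
    have hy' := (hcov y).resolve_left hy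
    rcases hx' with hxB | hxC <;> rcases hy' with hyB | hyC
    · have h1 := sumBC x c hxB hx hcC hcA
      have h2 := sumBC y c hyB hy hcC hcA
      simpa using A.sub_mem h1 h2
    · have h1 := sumBC x (-y) hxB hx (C.neg_mem hyC) (fun h => hy (by simpa using A.neg_mem h))
      simpa [sub_eq_add_neg] using h1
    · have h1 := sumBC y (-x) hyB hy (C.neg_mem hxC) (fun h => hx (by simpa using A.neg_mem h))
      have := A.neg_mem h1
      simpa [sub_eq_add_neg, add_comm] using this
    · have h1 := sumBC b x hbB hbA hxC hx
      have h2 := sumBC b y hbB hbA hyC hy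
      have := A.sub_mem h1 h2
      simpa using this
  rw [AddSubgroup.index_eq_two_iff]
  refine ⟨b, fun x => ?_⟩
  rcases Classical.em (x ∈ A) with hx | hx
  · refine Or.inr ⟨hx, fun h => hbA ?_⟩
    simpa using A.sub_mem (show x + b ∈ A from h) hx
  · refine Or.inl ⟨?_, hx⟩
    have := hsub x (-b) hx (fun h => hbA (by simpa using A.neg_mem h))
    simpa [sub_eq_add_neg] using this

end Aux

/-- If a ring is the union of three proper, pairwise distinct subrings `A`, `B`, `C`,
then all pairwise intersections equal `K = A ∩ B ∩ C`, and `K` has additive index `4`. -/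
theorem union_three_subrings_index_four (R : Type*) [NonUnitalRing R]
    (A B C : NonUnitalSubring R) (hA : A ≠ ⊤) (hB : B ≠ ⊤) (hC : C ≠ ⊤)
    (hAB : A ≠ B) (hAC : A ≠ C) (hBC : B ≠ C)
    (hcover : (A : Set R) ∪ (B : Set R) ∪ (C : Set R) = Set.univ) :
    A ⊓ B = A ⊓ B ⊓ C ∧ A ⊓ C = A ⊓ B ⊓ C ∧ B ⊓ C = A ⊓ B ⊓ C ∧
      (A ⊓ B ⊓ C).toAddSubgroup.index = 4 := by
  have hcov : ∀ x : R, x ∈ A ∨ x ∈ B ∨ x ∈ C := by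
    intro x
    have : x ∈ (A : Set R) ∪ (B : Set R) ∪ (C : Set R) := hcover ▸ Set.mem_univ x
    rcases this with (h | h) | h
    · exact Or.inl h
    · exact Or.inr (Or.inl h)
    · exact Or.inr (Or.inr h)
  -- existence of an element outside any two of the subrings
  have key : ∀ X Y Z : NonUnitalSubring R, Y ≠ ⊤ → Z ≠ ⊤ →
      (∀ x : R, x ∈ X ∨ x ∈ Y ∨ x ∈ Z) → ∃ x, x ∈ X ∧ x ∉ Y ∧ x ∉ Z := by
    intro X Y Z hY hZ hc
    obtain ⟨y, hy⟩ : ∃ y, y ∉ Y := by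
      by_contra h; push_neg at h; exact hY (Y.eq_top_iff'.2 h)
    obtain ⟨z, hz⟩ : ∃ z, z ∉ Z := by
      by_contra h; push_neg at h; exact hZ (Z.eq_top_iff'.2 h)
    by_contra h
    push_neg at h
    have hall : ∀ x : R, x ∈ Y ∨ x ∈ Z := by
      intro x
      rcases hc x with hx | hx | hx
      · rcases Classical.em (x ∈ Y) with h' | h'
        · exact Or.inl h'
        · exact Or.inr (h x hx h')
      · exact Or.inl hx
      · exact Or.inr hx
    have hyZ : y ∈ Z := (hall y).resolve_left hy
    have hzY : z ∈ Y := (hall z).resolve_right hz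
    rcases hall (y + z) with h' | h'
    · exact hy (by simpa using Y.sub_mem h' hzY)
    · exact hz (by simpa using Z.sub_mem h' hyZ)
  obtain ⟨a, haA, haB, haC⟩ := key A B C hB hC hcov
  obtain ⟨b, hbB, hbA, hbC⟩ := key B A C hA hC (fun x => by rcases hcov x with h|h|h <;> tauto)
  obtain ⟨c, hcC, hcA, hcB⟩ := key C A B hA hB (fun x => by rcases hcov x with h|h|h <;> tauto)
  -- pairwise intersections
  have hABC : A ⊓ B ≤ C := aux_inf_le_third A B C hcov c hcC hcA hcB
  have hACB : A ⊓ C ≤ B := by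
    refine aux_inf_le_third A C B (fun x => by rcases hcov x with h|h|h <;> tauto) b hbB hbA hbC
  have hBCA : B ⊓ C ≤ A := by
    refine aux_inf_le_third B C A (fun x => by rcases hcov x with h|h|h <;> tauto) a haA haB haC
  have e1 : A ⊓ B = A ⊓ B ⊓ C := le_antisymm (le_inf le_rfl hABC) inf_le_left
  have e2 : A ⊓ C = A ⊓ B ⊓ C := by
    refine le_antisymm (le_inf (le_inf inf_le_left hACB) inf_le_right) ?_
    exact le_inf (inf_le_left.trans inf_le_left) inf_le_right
  have e3 : B ⊓ C = A ⊓ B ⊓ C := by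
    refine le_antisymm (le_inf (le_inf hBCA inf_le_left) inf_le_right) ?_
    exact le_inf (inf_le_left.trans inf_le_right) inf_le_right
  refine ⟨e1, e2, e3, ?_⟩
  -- each of A, B has additive index 2
  have hiA : A.toAddSubgroup.index = 2 :=
    aux_index_two A B C hcov hBCA b hbB hbA c hcC hcA
  have hiB : B.toAddSubgroup.index = 2 := by
    refine aux_index_two B A C (fun x => by rcases hcov x with h|h|h <;> tauto) ?_
      a haA haB c hcC hcB
    intro x hx
    exact hACB ⟨hx.1, hx.2⟩
  -- the triple intersection equals A ⊓ B as additive subgroups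
  have hK : (A ⊓ B ⊓ C).toAddSubgroup = A.toAddSubgroup ⊓ B.toAddSubgroup := by
    rw [← e1]
    ext x
    simp [NonUnitalSubring.mem_toAddSubgroup, NonUnitalSubring.mem_inf, AddSubgroup.mem_inf]
  rw [hK]
  set HA := A.toAddSubgroup
  set HB := B.toAddSubgroup
  have hmul : (HA ⊓ HB).relIndex HB * HB.index = (HA ⊓ HB).index :=
    AddSubgroup.relIndex_mul_index inf_le_right
  have hrel : (HA ⊓ HB).relIndex HB = HA.relIndex HB := AddSubgroup.inf_relIndex_right HA HB
  have hdvd : HA.relIndex HB ∣ HA.index := AddSubgroup.relIndex_dvd_index_of_normal HA HB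
  rw [hiA] at hdvd
  have hne1 : HA.relIndex HB ≠ 1 := by
    intro h1
    have hBA : HB ≤ HA := AddSubgroup.relIndex_eq_one.mp h1
    have hmul2 : HB.relIndex HA * HA.index = HB.index :=
      AddSubgroup.relIndex_mul_index hBA
    rw [hiA, hiB] at hmul2
    have : HB.relIndex HA = 1 := by omega
    have hAB' : HA ≤ HB := AddSubgroup.relIndex_eq_one.mp this
    exact hAB (le_antisymm (fun x hx => hAB' hx) (fun x hx => hBA hx))
  have h2 : HA.relIndex HB = 2 :=
    (Nat.prime_two.eq_one_or_self_of_dvd _ hdvd).resolve_left hne1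
  rw [← hmul, hrel, h2, hiB]
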